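/- Let 𝒜 be a central hyperplane arrangement and ℜ ⊆ F(𝒜). Then I(ℜ) = √(J(ℜ)) : x_[n] = J(ℜ) : x_[n]. -/

import Mathlib

open MvPolynomial

noncomputable section

variable {K : Type*} [Field K] {n : ℕ}

open Classical in
/-- The support `supp(a) = {i : aᵢ ≠ 0}` of the linear form `∑ᵢ aᵢ xᵢ ∈ S₁`,
where linear forms of `S = K[x₁,…,xₙ]` are identified with their coefficient
vectors `a : Fin n → K`. -/
def lsupp (a : Fin n → K) : Finset (Fin n) :=
  Finset.univ.filter (fun i => a i ≠ 0)

/-- `ι(r) = ∑_{i ∈ supp r} aᵢ · x_{supp(r) ∖ {i}}` for the linear form `r = ∑ᵢ aᵢ xᵢ`. -/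
def iotaL (a : Fin n → K) : MvPolynomial (Fin n) K :=
  ∑ i ∈ lsupp a, C (a i) * ∏ j ∈ (lsupp a).erase i, X j

/-- `x_[n] = x₁⋯xₙ`. -/
def xAll (n : ℕ) (K : Type*) [Field K] : MvPolynomial (Fin n) K := ∏ i, X i

namespace OT

/-! ### lmap -/

variable (K) in
def lmap (d : ℕ) : (Fin d → K) →ₗ[K] MvPolynomial (Fin d) K :=
  ∑ j, (LinearMap.proj j).smulRight (X j)

lemma lmap_apply {d : ℕ} (w : Fin d → K) : lmap K d w = ∑ j, C (w j) * X j := by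
  simp [lmap, LinearMap.sum_apply, LinearMap.smulRight_apply, smul_eq_C_mul]

lemma lmap_eq_zero_iff {d : ℕ} (w : Fin d → K) : lmap K d w = 0 ↔ w = 0 := by
  constructor
  · intro h
    funext j
    have := congrArg (coeff (Finsupp.single j 1)) h
    rw [lmap_apply] at this
    simp only [coeff_sum, coeff_C_mul, coeff_X', coeff_zero] at this
    rw [Finset.sum_eq_single j] at this
    · simpa using this
    · intro b _ hb
      rw [if_neg, mul_zero]
      intro hcon
      exact hb (by simpa using (Finsupp.single_left_inj one_ne_zero).mp hcon)
    · simp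
  · intro h; rw [h, map_zero]

variable (K) in
abbrev FF (d : ℕ) := FractionRing (MvPolynomial (Fin d) K)

variable (K) in
def aMap (d : ℕ) : MvPolynomial (Fin d) K →+* FF K d := algebraMap _ _

def phi {d n : ℕ} (v : Fin n → (Fin d → K)) : MvPolynomial (Fin n) K →ₐ[K] FF K d :=
  aeval fun i => (aMap K d (lmap K d (v i)))⁻¹

lemma aMap_injective {d : ℕ} : Function.Injective (aMap K d) :=
  IsFractionRing.injective _ _

lemma aMap_lmap_ne {d n : ℕ} (v : Fin n → (Fin d → K)) (hv : ∀ i, v i ≠ 0) (i : Fin n) :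
    aMap K d (lmap K d (v i)) ≠ 0 := by
  simp only [aMap, ne_eq, IsFractionRing.to_map_eq_zero_iff]
  rw [lmap_eq_zero_iff]
  exact hv i

/-! ### Phi -/

def Phi {n : ℕ} {A : Type*} [CommSemiring A] [Algebra K A] (L : Fin n → A) (M : Fin n → ℕ)
    (f : MvPolynomial (Fin n) K) : A :=
  ∑ m ∈ f.support, algebraMap K A (coeff m f) * ∏ i, L i ^ (M i - m i)

lemma Phi_def {n : ℕ} {A : Type*} [CommSemiring A] [Algebra K A] (L : Fin n → A) (M : Fin n → ℕ)
    (f : MvPolynomial (Fin n) K) :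
    Phi L M f = Finsupp.sum (AddMonoidAlgebra.coeff f) (fun m c => algebraMap K A c * ∏ i, L i ^ (M i - m i)) := rfl

lemma Phi_algHom {n : ℕ} {A B : Type*} [CommSemiring A] [Algebra K A] [CommSemiring B]
    [Algebra K B] (h : A →ₐ[K] B) (L : Fin n → A) (M : Fin n → ℕ) (f : MvPolynomial (Fin n) K) :
    h (Phi L M f) = Phi (fun i => h (L i)) M f := by
  unfold Phi
  rw [map_sum]
  refine Finset.sum_congr rfl fun m _ => ?_
  rw [map_mul, map_prod, AlgHom.commutes]
  simp [map_pow]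

lemma phi_eq_zero_iff_Phi {d n : ℕ} (v : Fin n → (Fin d → K)) (hv : ∀ i, v i ≠ 0)
    (M : Fin n → ℕ) (f : MvPolynomial (Fin n) K) (hM : ∀ m ∈ f.support, ∀ i, m i ≤ M i) :
    phi v f = 0 ↔ Phi (fun i => lmap K d (v i)) M f = 0 := by
  have hva := aMap_lmap_ne v hv
  have key : aMap K d (Phi (fun i => lmap K d (v i)) M f)
      = phi v f * ∏ i, (aMap K d (lmap K d (v i))) ^ (M i) := by
    rw [Phi, map_sum, phi, aeval_def, eval₂_eq', Finset.sum_mul]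
    refine Finset.sum_congr rfl fun m hm => ?_
    rw [map_mul, map_prod]
    rw [IsScalarTower.algebraMap_apply K (MvPolynomial (Fin d) K) (FF K d), mul_assoc,
      ← Finset.prod_mul_distrib]
    congr 1
    refine Finset.prod_congr rfl fun i _ => ?_
    rw [map_pow, inv_pow, mul_comm, ← pow_sub₀ _ (hva i) (hM m hm i)]
  constructor
  · intro h
    have h1 : aMap K d (Phi (fun i => lmap K d (v i)) M f) = 0 := by rw [key, h, zero_mul]
    exact aMap_injective (by simpa using h1)
  · intro h
    have h2 : phi v f * ∏ i, (aMap K d (lmap K d (v i))) ^ (M i) = 0 := by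
      rw [← key, h, map_zero]
    rcases mul_eq_zero.mp h2 with h3 | h3
    · exact h3
    · exact absurd h3 (Finset.prod_ne_zero_iff.mpr fun i _ => pow_ne_zero _ (hva i))

lemma Phi_finSuccEquiv {n : ℕ} {A : Type*} [CommSemiring A] [Algebra K A]
    (L : Fin (n + 1) → A) (M : Fin (n + 1) → ℕ) (f : MvPolynomial (Fin (n + 1)) K)
    (hM : degreeOf 0 f ≤ M 0) :
    Phi L M f = ∑ k ∈ Finset.range (M 0 + 1),
      L 0 ^ (M 0 - k) * Phi (fun i => L i.succ) (fun i => M i.succ)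
        ((finSuccEquiv K n f).coeff k) := by
  classical
  unfold Phi
  have hfib := Finset.sum_fiberwise_of_maps_to (s := f.support)
    (g := fun m : Fin (n+1) →₀ ℕ => m 0) (t := Finset.range (M 0 + 1))
    (fun m hm => Finset.mem_range.mpr (Nat.lt_succ_of_le (le_trans
      (degreeOf_le_iff.mp le_rfl m hm) hM)))
    (fun m => algebraMap K A (coeff m f) * ∏ i, L i ^ (M i - m i))
  refine Eq.trans (hfib.symm) ?_
  refine Finset.sum_congr rfl fun k hk => ?_
  rw [Finset.mul_sum]
  refine Finset.sum_nbij' (i := fun m => Finsupp.tail m) (j := fun m' => Finsupp.cons k m')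
    ?_ ?_ ?_ ?_ ?_
  · intro m hm
    rw [Finset.mem_filter] at hm
    refine mem_support_iff.mpr ?_
    rw [finSuccEquiv_coeff_coeff,
      show Finsupp.cons k (Finsupp.tail m) = m from hm.2 ▸ Finsupp.cons_tail m]
    exact mem_support_iff.mp hm.1
  · intro m' hm'
    have h0 := mem_support_iff.mp hm'
    rw [finSuccEquiv_coeff_coeff] at h0
    rw [Finset.mem_filter]
    exact ⟨mem_support_iff.mpr h0, Finsupp.cons_zero _ _⟩
  · intro m hm
    rw [Finset.mem_filter] at hm
    exact hm.2 ▸ Finsupp.cons_tail m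
  · intro m' _
    exact Finsupp.tail_cons k m'
  · intro m hm
    rw [Finset.mem_filter] at hm
    dsimp only
    rw [finSuccEquiv_coeff_coeff,
      show Finsupp.cons k (Finsupp.tail m) = m from hm.2 ▸ Finsupp.cons_tail m]
    rw [Fin.prod_univ_succ]
    have ht : ∀ i : Fin n, Finsupp.tail m i = m i.succ := by simp [Finsupp.tail_apply]
    simp only [ht, hm.2]
    ring

/-! ### lsupp and iotaL lemmas -/

lemma mem_lsupp {a : Fin n → K} {i : Fin n} : i ∈ lsupp a ↔ a i ≠ 0 := by
  simp [lsupp]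

lemma lsupp_cons_zero {m : ℕ} (b : Fin m → K) :
    lsupp (Fin.cons (0 : K) b) = (lsupp b).map (Fin.succEmb m) := by
  ext j
  rw [mem_lsupp, Finset.mem_map]
  refine Fin.cases ?_ (fun i => ?_) j
  · simp [Fin.succEmb, Fin.succ_ne_zero]
  · simp only [Fin.cons_succ]
    constructor
    · intro h; exact ⟨i, mem_lsupp.mpr h, rfl⟩
    · rintro ⟨i', hi', he⟩
      have : i' = i := Fin.succ_injective _ he
      subst this
      exact mem_lsupp.mp hi'

lemma lsupp_cons_ne {m : ℕ} (b : Fin m → K) {t : K} (ht : t ≠ 0) :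
    lsupp (Fin.cons t b) = insert 0 ((lsupp b).map (Fin.succEmb m)) := by
  ext j
  rw [mem_lsupp, Finset.mem_insert, Finset.mem_map]
  refine Fin.cases ?_ (fun i => ?_) j
  · simp [ht]
  · simp only [Fin.cons_succ]
    constructor
    · intro h; exact Or.inr ⟨i, mem_lsupp.mpr h, rfl⟩
    · rintro (h | ⟨i', hi', he⟩)
      · exact absurd h (Fin.succ_ne_zero i)
      · have : i' = i := Fin.succ_injective _ he
        subst this
        exact mem_lsupp.mp hi'

lemma rename_prodX {m : ℕ} (s : Finset (Fin m)) :
    rename Fin.succ (∏ j ∈ s, (X j : MvPolynomial (Fin m) K))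
      = ∏ j ∈ s.map (Fin.succEmb m), X j := by
  rw [map_prod, Finset.prod_map]
  exact Finset.prod_congr rfl fun j _ => by rw [rename_X]; rfl

lemma iotaL_cons_zero {m : ℕ} (b : Fin m → K) :
    iotaL (Fin.cons 0 b) = rename Fin.succ (iotaL b) := by
  unfold iotaL
  rw [map_sum, lsupp_cons_zero, Finset.sum_map]
  refine Finset.sum_congr rfl fun i hi => ?_
  rw [map_mul, rename_C, ← Finset.map_erase, ← rename_prodX]
  simp [Fin.succEmb]

lemma iotaL_cons_ne {m : ℕ} (b : Fin m → K) {t : K} (ht : t ≠ 0) :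
    iotaL (Fin.cons t b) =
      C t * rename Fin.succ (∏ i ∈ lsupp b, X i) + X 0 * rename Fin.succ (iotaL b) := by
  unfold iotaL
  rw [lsupp_cons_ne b ht, Finset.sum_insert (by simp [Fin.succEmb, Fin.succ_ne_zero])]
  congr 1
  · rw [Finset.erase_insert (by simp [Fin.succEmb, Fin.succ_ne_zero])]
    rw [rename_prodX]
    simp
  · rw [map_sum, Finset.mul_sum, Finset.sum_map]
    refine Finset.sum_congr rfl fun i hi => ?_
    rw [Finset.erase_insert_of_ne (by simpa [Fin.succEmb] using (Fin.succ_ne_zero i).symm),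
      Finset.prod_insert (by simp [Fin.succEmb, Fin.succ_ne_zero, Finset.mem_erase]),
      ← Finset.map_erase, map_mul, rename_C, ← rename_prodX]
    simp only [Fin.succEmb, Function.Embedding.coeFn_mk, Fin.cons_succ]
    ring

lemma lsupp_single {i₀ : Fin n} : lsupp (Pi.single i₀ (1 : K)) = {i₀} := by
  ext j
  rw [mem_lsupp, Finset.mem_singleton]
  rcases eq_or_ne j i₀ with rfl | hj
  · simp
  · simp [Pi.single_eq_of_ne hj, hj]

lemma iotaL_single_one {i₀ : Fin n} : iotaL (Pi.single i₀ (1 : K)) = 1 := by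
  unfold iotaL
  rw [lsupp_single, Finset.sum_singleton, Finset.erase_singleton]
  simp

/-! ### easy inclusion -/

lemma span_iota_le_ker {d n : ℕ} (v : Fin n → (Fin d → K)) (hv : ∀ i, v i ≠ 0) :
    Ideal.span (iotaL '' {a | ∑ i, a i • v i = 0}) ≤ RingHom.ker (phi v).toRingHom := by
  rw [Ideal.span_le]
  rintro _ ⟨a, ha, rfl⟩
  simp only [SetLike.mem_coe, RingHom.mem_ker, AlgHom.toRingHom_eq_coe, RingHom.coe_coe]
  have hune : ∀ j, aMap K d (lmap K d (v j)) ≠ 0 := aMap_lmap_ne v hv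
  have key : phi v (iotaL a) * ∏ j ∈ lsupp a, aMap K d (lmap K d (v j)) = 0 := by
    unfold iotaL
    rw [map_sum, Finset.sum_mul]
    have hterm : ∀ i ∈ lsupp a,
        phi v (C (a i) * ∏ j ∈ (lsupp a).erase i, X j) * ∏ j ∈ lsupp a, aMap K d (lmap K d (v j))
        = aMap K d (lmap K d (a i • v i)) := by
      intro i hi
      have hphiC : phi v (C (a i)) = algebraMap K (FF K d) (a i) := by simp [phi]
      have hphiprod : phi v (∏ j ∈ (lsupp a).erase i, X j)
          = ∏ j ∈ (lsupp a).erase i, (aMap K d (lmap K d (v j)))⁻¹ := by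
        rw [map_prod]
        exact Finset.prod_congr rfl fun j _ => by simp [phi]
      have hCmap : (aMap K d) (C (a i)) = algebraMap K (FF K d) (a i) := by
        rw [aMap, ← algebraMap_eq K (Fin d), ← IsScalarTower.algebraMap_apply]
      have hPP : (∏ j ∈ (lsupp a).erase i, (aMap K d (lmap K d (v j)))⁻¹)
          * (∏ j ∈ (lsupp a).erase i, aMap K d (lmap K d (v j))) = 1 := by
        rw [← Finset.prod_mul_distrib,
          Finset.prod_congr rfl (fun j _ => inv_mul_cancel₀ (hune j)), Finset.prod_const_one]
      rw [map_mul, hphiC, hphiprod, ← Finset.prod_erase_mul (lsupp a) _ hi,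
        map_smul, smul_eq_C_mul, map_mul, hCmap]
      calc (algebraMap K (FF K d) (a i) * ∏ j ∈ (lsupp a).erase i, (aMap K d (lmap K d (v j)))⁻¹)
            * ((∏ j ∈ (lsupp a).erase i, aMap K d (lmap K d (v j))) * aMap K d (lmap K d (v i)))
          = (algebraMap K (FF K d) (a i) * aMap K d (lmap K d (v i)))
            * ((∏ j ∈ (lsupp a).erase i, (aMap K d (lmap K d (v j)))⁻¹)
              * (∏ j ∈ (lsupp a).erase i, aMap K d (lmap K d (v j)))) := by ring
        _ = algebraMap K (FF K d) (a i) * aMap K d (lmap K d (v i)) := by rw [hPP, mul_one]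
    rw [Finset.sum_congr rfl hterm, ← map_sum, ← map_sum]
    have hsub : ∑ i ∈ lsupp a, a i • v i = ∑ i, a i • v i :=
      Finset.sum_subset (Finset.subset_univ _) (fun x _ hx => by
        rw [show a x = 0 from not_not.mp (fun h => hx (mem_lsupp.mpr h)), zero_smul])
    rw [hsub, ha, map_zero, map_zero]
  rcases mul_eq_zero.mp key with h | h
  · exact h
  · exact absurd h (Finset.prod_ne_zero_iff.mpr fun j _ => hune j)


/-! ### rename helpers -/

lemma phi_rename {d m : ℕ} (v : Fin (m + 1) → (Fin d → K)) (g : MvPolynomial (Fin m) K) :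
    phi v (rename Fin.succ g) = phi (fun i => v i.succ) g := by
  unfold phi
  rw [aeval_rename]
  rfl

lemma rename_mem_I {d m : ℕ} (v : Fin (m + 1) → (Fin d → K)) (g : MvPolynomial (Fin m) K)
    (hg : g ∈ Ideal.span (iotaL '' {b : Fin m → K | ∑ i, b i • v i.succ = 0})) :
    rename Fin.succ g ∈ Ideal.span (iotaL '' {a : Fin (m + 1) → K | ∑ i, a i • v i = 0}) := by
  have h1 : rename Fin.succ g ∈ Ideal.map (rename Fin.succ)
      (Ideal.span (iotaL '' {b : Fin m → K | ∑ i, b i • v i.succ = 0})) :=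
    Ideal.mem_map_of_mem _ hg
  rw [Ideal.map_span] at h1
  refine Ideal.span_mono ?_ h1
  rintro _ ⟨_, ⟨b, hb, rfl⟩, rfl⟩
  refine ⟨Fin.cons 0 b, ?_, iotaL_cons_zero b⟩
  rw [Set.mem_setOf_eq, Fin.sum_univ_succ]
  simp only [Fin.cons_zero, Fin.cons_succ, zero_smul, zero_add]
  exact hb

lemma finSuccEquiv_rename_succ {m : ℕ} (g : MvPolynomial (Fin m) K) :
    finSuccEquiv K m (rename Fin.succ g) = Polynomial.C g := by
  have hcomp : (finSuccEquiv K m).toAlgHom.comp (rename Fin.succ)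
      = (Polynomial.CAlgHom : MvPolynomial (Fin m) K →ₐ[K] _) := by
    apply algHom_ext
    intro i
    simp [Polynomial.CAlgHom, finSuccEquiv_X_succ]
  have := congrArg (fun h : MvPolynomial (Fin m) K →ₐ[K] _ => h g) hcomp
  simpa [Polynomial.CAlgHom] using this

lemma degreeOf_zero_rename_succ {m : ℕ} (w : MvPolynomial (Fin m) K) :
    degreeOf (0 : Fin (m + 1)) (rename Fin.succ w) = 0 := by
  classical
  refine Nat.le_zero.mp (degreeOf_le_iff.mpr fun mm hmm => ?_)
  by_contra hpos
  have h0 : (0 : Fin (m+1)) ∈ mm.support := Finsupp.mem_support_iff.mpr (by omega)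
  have hv : (0 : Fin (m+1)) ∈ (rename Fin.succ w).vars := (mem_vars 0).mpr ⟨mm, hmm, h0⟩
  have := vars_rename Fin.succ w hv
  rcases Finset.mem_image.mp this with ⟨i, _, hi⟩
  exact Fin.succ_ne_zero i hi

lemma sub_subst_mem_span {m : ℕ} (i₀ : Fin m) (c : K) (f : MvPolynomial (Fin (m + 1)) K) :
    f - rename Fin.succ (aeval (Fin.cons (c • X i₀) X) f) ∈
      Ideal.span {X 0 - c • X i₀.succ} := by
  set Q := Ideal.span {(X 0 - c • X i₀.succ : MvPolynomial (Fin (m + 1)) K)} with hQ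
  have hcomp : (Ideal.Quotient.mkₐ K Q)
      = ((Ideal.Quotient.mkₐ K Q).comp ((rename Fin.succ).comp
          (aeval (Fin.cons (c • X i₀) X)))) := by
    apply algHom_ext
    intro j
    refine Fin.cases ?_ (fun i => ?_) j
    · simp only [Ideal.Quotient.mkₐ_eq_mk, AlgHom.comp_apply, aeval_X, Fin.cons_zero]
      rw [map_smul, rename_X]
      rw [Ideal.Quotient.eq]
      exact Ideal.subset_span rfl
    · simp only [Ideal.Quotient.mkₐ_eq_mk, AlgHom.comp_apply, aeval_X, Fin.cons_succ, rename_X]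
  have := congrArg (fun h : MvPolynomial (Fin (m+1)) K →ₐ[K] _ => h f) hcomp
  simp only [Ideal.Quotient.mkₐ_eq_mk, AlgHom.comp_apply] at this
  exact Ideal.Quotient.eq.mp this

lemma algebraMapFF_ne_zero {d : ℕ} {c : K} (hc : c ≠ 0) : algebraMap K (FF K d) c ≠ 0 :=
  fun h => hc ((algebraMap K (FF K d)).injective (by rw [h, map_zero]))

lemma phi_X {d m : ℕ} (v : Fin m → (Fin d → K)) (i : Fin m) :
    phi v (X i) = (aMap K d (lmap K d (v i)))⁻¹ := by simp [phi]

lemma aMap_C {d : ℕ} (c : K) : aMap K d (C c) = algebraMap K (FF K d) c := by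
  rw [aMap, ← algebraMap_eq K (Fin d), ← IsScalarTower.algebraMap_apply]

set_option maxHeartbeats 1600000 in
theorem ker_phi_le {d : ℕ} : ∀ (n : ℕ) (v : Fin n → (Fin d → K)), (∀ i, v i ≠ 0) →
    ∀ f : MvPolynomial (Fin n) K, phi v f = 0 →
      f ∈ Ideal.span (iotaL '' {a | ∑ i, a i • v i = 0}) := by
  intro n
  induction n with
  | zero =>
    intro v hv f hf
    have hfC : f = C (coeff 0 f) := eq_C_of_isEmpty f
    have hphiC : phi v f = algebraMap K (FF K d) (coeff 0 f) := by
      rw [hfC]; simp [phi]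
    rw [hphiC] at hf
    have hc0 : coeff 0 f = 0 := (algebraMap K (FF K d)).injective (by rw [hf, map_zero])
    rw [hfC, hc0, map_zero]
    exact Ideal.zero_mem _
  | succ n IH =>
    intro v hv f hf
    set Iv := Ideal.span (iotaL '' {a : Fin (n+1) → K | ∑ i, a i • v i = 0}) with hIv
    have hIker := span_iota_le_ker v hv
    have hbase : ∀ g : MvPolynomial (Fin n) K, phi (fun i => v i.succ) g = 0 →
        rename Fin.succ g ∈ Iv := fun g hg =>
      rename_mem_I v g (IH (fun i => v i.succ) (fun i => hv i.succ) g hg)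
    have hbase0 : ∀ f₁ : MvPolynomial (Fin (n+1)) K, degreeOf 0 f₁ = 0 → phi v f₁ = 0 →
        f₁ ∈ Iv := by
      intro f₁ hdeg hf₁
      have hnd : (finSuccEquiv K n f₁).natDegree = 0 := by rw [natDegree_finSuccEquiv, hdeg]
      have hPC : finSuccEquiv K n f₁ = Polynomial.C ((finSuccEquiv K n f₁).coeff 0) :=
        Polynomial.eq_C_of_natDegree_eq_zero hnd
      have hf₁eq : f₁ = rename Fin.succ ((finSuccEquiv K n f₁).coeff 0) := by
        apply (finSuccEquiv K n).injective
        rw [finSuccEquiv_rename_succ]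
        exact hPC
      rw [hf₁eq]
      refine hbase _ ?_
      rw [← phi_rename v, ← hf₁eq]
      exact hf₁
    by_cases hB1 : ∃ (i : Fin n) (c : K), v i.succ = c • v 0
    · obtain ⟨i₀, c, hic⟩ := hB1
      have hc : c ≠ 0 := by
        intro h
        exact hv i₀.succ (by rw [hic, h, zero_smul])
      have hgen : (X 0 - c • X i₀.succ : MvPolynomial (Fin (n+1)) K) ∈ Iv := by
        have haU : ∑ j, (Fin.cons (-c) (Pi.single i₀ (1:K)) : Fin (n+1) → K) j • v j = 0 := by
          rw [Fin.sum_univ_succ]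
          simp only [Fin.cons_zero, Fin.cons_succ]
          have hsing : ∑ i, (Pi.single i₀ (1 : K) : Fin n → K) i • v i.succ = v i₀.succ := by
            rw [Finset.sum_eq_single i₀]
            · simp
            · intro b _ hb; rw [Pi.single_eq_of_ne hb, zero_smul]
            · simp
          rw [hsing, hic, neg_smul, neg_add_cancel]
        have hiota : iotaL (Fin.cons (-c) (Pi.single i₀ (1:K))) = X 0 - c • X i₀.succ := by
          rw [iotaL_cons_ne _ (neg_ne_zero.mpr hc), lsupp_single, iotaL_single_one,
            Finset.prod_singleton, rename_X, map_one, mul_one, smul_eq_C_mul, map_neg]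
          ring
        rw [← hiota]
        exact Ideal.subset_span ⟨_, haU, rfl⟩
      set g := aeval (Fin.cons (c • (X i₀ : MvPolynomial (Fin n) K)) X) f with hgdef
      have hsub' : f - rename Fin.succ g ∈ Iv :=
        Ideal.span_le.mpr (Set.singleton_subset_iff.mpr hgen) (sub_subst_mem_span i₀ c f)
      have hcomp : (phi v : MvPolynomial (Fin (n+1)) K →ₐ[K] FF K d)
          = (phi (fun i => v i.succ)).comp (aeval (Fin.cons (c • X i₀) X)) := by
        apply algHom_ext
        intro j
        refine Fin.cases ?_ (fun i => ?_) j
        · rw [AlgHom.comp_apply, aeval_X, Fin.cons_zero, map_smul, phi_X, phi_X]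
          rw [hic, map_smul, smul_eq_C_mul, map_mul, aMap_C, mul_inv,
            Algebra.smul_def, ← mul_assoc, mul_inv_cancel₀ (algebraMapFF_ne_zero hc), one_mul]
        · rw [AlgHom.comp_apply, aeval_X, Fin.cons_succ, phi_X, phi_X]
      have hg0 : phi (fun i => v i.succ) g = 0 := by
        rw [hgdef, ← AlgHom.comp_apply, ← hcomp]
        exact hf
      have hmem := hbase g hg0
      have hfin : f = (f - rename Fin.succ g) + rename Fin.succ g := by ring
      rw [hfin]
      exact Ideal.add_mem _ hsub' hmem
    · push_neg at hB1
      obtain ⟨j₀, hj₀⟩ := Function.ne_iff.mp (hv 0)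
      have hj₀' : v 0 j₀ ≠ 0 := by simpa using hj₀
      set ψ : (Fin d → K) →ₗ[K] K := (v 0 j₀)⁻¹ • LinearMap.proj j₀ with hψdef
      have hψ : ∀ w, ψ w = (v 0 j₀)⁻¹ * w j₀ := fun w => rfl
      have hψ0 : ψ (v 0) = 1 := by rw [hψ, inv_mul_cancel₀ hj₀']
      set ρ : (Fin d → K) →ₗ[K] (Fin d → K) := LinearMap.id - LinearMap.smulRight ψ (v 0)
        with hρdef
      have hρ : ∀ w, ρ w = w - ψ w • v 0 := fun w => rfl
      have hρ0 : ρ (v 0) = 0 := by rw [hρ, hψ0, one_smul, sub_self]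
      set vbar : Fin n → (Fin d → K) := fun i => ρ (v i.succ) with hvbardef
      have hvbar : ∀ i, vbar i ≠ 0 := by
        intro i hzero
        refine hB1 i (ψ (v i.succ)) ?_
        have h1 : v i.succ - ψ (v i.succ) • v 0 = 0 := by
          rw [← hρ]
          exact hzero
        exact sub_eq_zero.mp h1
      set ρhat : MvPolynomial (Fin d) K →ₐ[K] MvPolynomial (Fin d) K :=
        aeval (fun j => lmap K d (ρ (Pi.single j 1))) with hρhatdef
      have hρhat : ∀ w, ρhat (lmap K d w) = lmap K d (ρ w) := by
        intro w
        have hwsum : ∑ j, w j • (Pi.single j (1:K) : Fin d → K) = w := by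
          rw [Finset.sum_congr rfl (fun j _ => by
            rw [← Pi.single_smul, smul_eq_mul, mul_one] :
              ∀ j ∈ Finset.univ, w j • (Pi.single j (1:K) : Fin d → K) = Pi.single j (w j))]
          exact Finset.univ_sum_single w
        rw [lmap_apply, map_sum]
        have hterm : ∀ j : Fin d, ρhat (C (w j) * X j)
            = lmap K d (ρ (w j • (Pi.single j (1:K) : Fin d → K))) := by
          intro j
          rw [map_mul, map_smul, map_smul, hρhatdef]
          rw [aeval_X, aeval_C, algebraMap_eq, ← smul_eq_C_mul]
        rw [Finset.sum_congr rfl (fun j _ => hterm j), ← map_sum, ← map_sum, hwsum]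
      have KEY : ∀ (D : ℕ) (f₁ : MvPolynomial (Fin (n+1)) K), degreeOf 0 f₁ ≤ D →
          phi v f₁ = 0 → f₁ ∈ Iv := by
        intro D
        induction D with
        | zero => intro f₁ hdeg hf₁; exact hbase0 f₁ (Nat.le_zero.mp hdeg) hf₁
        | succ D ihD =>
          intro f₁ hdeg hf₁
          by_cases hle : degreeOf 0 f₁ ≤ D
          · exact ihD f₁ hle hf₁
          · have hD0 : degreeOf 0 f₁ = D + 1 := le_antisymm hdeg (by omega)
            set P := finSuccEquiv K n f₁ with hPdef
            have hND : P.natDegree = D + 1 := by rw [hPdef, natDegree_finSuccEquiv, hD0]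
            set ftop := P.coeff (D+1) with hftopdef
            set M : Fin (n+1) → ℕ := Fin.cons (D+1) (fun i => degreeOf i.succ f₁) with hMdef
            have hM0 : M 0 = D + 1 := by rw [hMdef]; exact Fin.cons_zero _ _
            have hMs : ∀ i : Fin n, M i.succ = degreeOf i.succ f₁ := by
              intro i; rw [hMdef]; exact Fin.cons_succ _ _ _
            have hM : ∀ m ∈ f₁.support, ∀ i, m i ≤ M i := by
              intro m hm i
              refine Fin.cases ?_ (fun i' => ?_) i
              · rw [hM0, ← hD0]
                exact degreeOf_le_iff.mp le_rfl m hm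
              · rw [hMs]
                exact degreeOf_le_iff.mp le_rfl m hm
            have hΦ : Phi (fun i => lmap K d (v i)) M f₁ = 0 :=
              (phi_eq_zero_iff_Phi v hv M f₁ hM).mp hf₁
            have hΦρ : Phi (fun i => lmap K d (ρ (v i))) M f₁ = 0 := by
              have h := congrArg ρhat hΦ
              rw [Phi_algHom, map_zero] at h
              rw [show (fun i => lmap K d (ρ (v i))) = (fun i => ρhat (lmap K d (v i)))
                from funext fun i => (hρhat (v i)).symm]
              exact h
            have hdec := Phi_finSuccEquiv (fun i => lmap K d (ρ (v i))) M f₁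
              (by rw [hM0, hD0])
            beta_reduce at hdec
            rw [hΦρ, hρ0, map_zero] at hdec
            rw [Finset.sum_eq_single (M 0)
              (fun k hk hne => by
                rw [zero_pow (by have := Finset.mem_range.mp hk; omega : M 0 - k ≠ 0), zero_mul])
              (fun h => absurd (Finset.self_mem_range_succ (M 0)) h)] at hdec
            rw [Nat.sub_self, pow_zero, one_mul] at hdec
            rw [hM0] at hdec
            have htopphi : phi vbar ftop = 0 := by
              refine (phi_eq_zero_iff_Phi vbar hvbar (fun i => M i.succ) ftop ?_).mpr ?_
              · intro m hm i
                show m i ≤ M i.succ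
                rw [hMs]
                exact le_trans (degreeOf_le_iff.mp le_rfl m hm)
                  (degreeOf_coeff_finSuccEquiv f₁ i (D+1))
              · exact hdec.symm
            have hvIH := IH vbar hvbar ftop htopphi
            have hred : ∀ g, g ∈ Ideal.span (iotaL '' {b : Fin n → K | ∑ i, b i • vbar i = 0}) →
                ∃ w : MvPolynomial (Fin n) K,
                  X 0 * rename Fin.succ g - rename Fin.succ w ∈ Iv := by
              intro g hg
              refine Submodule.span_induction ?_ ?_ ?_ ?_ hg
              · rintro _ ⟨b, hb, rfl⟩
                set s := ∑ i, b i • v i.succ with hsdef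
                have hρs : ρ s = 0 := by
                  rw [hsdef, map_sum]
                  simp only [map_smul]
                  exact hb
                have hs : s = ψ s • v 0 := by
                  have h2 := hρ s
                  rw [hρs] at h2
                  exact sub_eq_zero.mp h2.symm
                by_cases hlam : ψ s = 0
                · refine ⟨0, ?_⟩
                  rw [map_zero, sub_zero]
                  have hbU : ∑ j, (Fin.cons 0 b : Fin (n+1) → K) j • v j = 0 := by
                    rw [Fin.sum_univ_succ]
                    simp only [Fin.cons_zero, Fin.cons_succ, zero_smul, zero_add]
                    rw [← hsdef, hs, hlam, zero_smul]
                  rw [← iotaL_cons_zero]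
                  exact Ideal.mul_mem_left _ _ (Ideal.subset_span ⟨_, hbU, rfl⟩)
                · refine ⟨ψ s • ∏ i ∈ lsupp b, X i, ?_⟩
                  have hbU : ∑ j, (Fin.cons (-(ψ s)) b : Fin (n+1) → K) j • v j = 0 := by
                    rw [Fin.sum_univ_succ]
                    simp only [Fin.cons_zero, Fin.cons_succ]
                    rw [← hsdef]
                    nth_rewrite 2 [hs]
                    rw [neg_smul, neg_add_cancel]
                  have hkey : X 0 * rename Fin.succ (iotaL b)
                      - rename Fin.succ (ψ s • ∏ i ∈ lsupp b, X i)
                      = iotaL (Fin.cons (-(ψ s)) b) := by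
                    rw [iotaL_cons_ne _ (neg_ne_zero.mpr hlam), map_smul, smul_eq_C_mul, map_neg]
                    ring
                  rw [hkey]
                  exact Ideal.subset_span ⟨_, hbU, rfl⟩
              · exact ⟨0, by rw [map_zero, mul_zero, sub_zero]; exact Ideal.zero_mem _⟩
              · rintro x y hx hy ⟨w₁, hw₁⟩ ⟨w₂, hw₂⟩
                refine ⟨w₁ + w₂, ?_⟩
                have heq : X 0 * rename Fin.succ (x + y) - rename Fin.succ (w₁ + w₂)
                    = (X 0 * rename Fin.succ x - rename Fin.succ w₁)
                      + (X 0 * rename Fin.succ y - rename Fin.succ w₂) := by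
                  rw [map_add, map_add]; ring
                rw [heq]
                exact Ideal.add_mem _ hw₁ hw₂
              · rintro a x hx ⟨w, hw⟩
                refine ⟨a * w, ?_⟩
                have heq : X 0 * rename Fin.succ (a • x) - rename Fin.succ (a * w)
                    = rename Fin.succ a * (X 0 * rename Fin.succ x - rename Fin.succ w) := by
                  rw [smul_eq_mul, map_mul, map_mul]; ring
                rw [heq]
                exact Ideal.mul_mem_left _ _ hw
            obtain ⟨w, hw⟩ := hred ftop hvIH
            set elt := X 0 ^ (D+1) * rename Fin.succ ftop - X 0 ^ D * rename Fin.succ w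
              with helt
            have heltI : elt ∈ Iv := by
              have h2 := Ideal.mul_mem_left _ (X 0 ^ D) hw
              have heq : elt = X 0 ^ D * (X 0 * rename Fin.succ ftop - rename Fin.succ w) := by
                rw [helt]; ring
              rw [heq]
              exact h2
            have hphielt : phi v elt = 0 := hIker heltI
            set fhat := f₁ - elt with hfhat
            have hfhatker : phi v fhat = 0 := by
              rw [hfhat, map_sub, hf₁, hphielt, sub_zero]
            have hr : degreeOf 0 (f₁ - X 0 ^ (D+1) * rename Fin.succ ftop) ≤ D := by
              have hfs : finSuccEquiv K n (f₁ - X 0 ^ (D+1) * rename Fin.succ ftop)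
                  = P.eraseLead := by
                rw [map_sub, map_mul, map_pow, finSuccEquiv_X_zero, finSuccEquiv_rename_succ,
                  ← hPdef, ← Polynomial.self_sub_C_mul_X_pow]
                rw [Polynomial.leadingCoeff, hND, ← hftopdef]
                ring
              have hnd2 := natDegree_finSuccEquiv (f₁ - X 0 ^ (D+1) * rename Fin.succ ftop)
              rw [hfs] at hnd2
              calc degreeOf 0 (f₁ - X 0 ^ (D+1) * rename Fin.succ ftop)
                  = P.eraseLead.natDegree := hnd2.symm
                _ ≤ P.natDegree - 1 := Polynomial.eraseLead_natDegree_le P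
                _ ≤ D := by rw [hND]; omega
            have hfhatdeg : degreeOf 0 fhat ≤ D := by
              have heq : fhat = (f₁ - X 0 ^ (D+1) * rename Fin.succ ftop)
                  + X 0 ^ D * rename Fin.succ w := by
                rw [hfhat, helt]; ring
              rw [heq]
              refine le_trans (degreeOf_add_le _ _ _) (max_le hr ?_)
              refine le_trans (degreeOf_mul_le _ _ _) ?_
              rw [degreeOf_zero_rename_succ, add_zero]
              refine le_trans (degreeOf_pow_le _ _ _) ?_
              classical
              rw [degreeOf_X]
              simp
            have hfhatI := ihD fhat hfhatdeg hfhatker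
            have hfin : f₁ = fhat + elt := by rw [hfhat]; ring
            rw [hfin]
            exact Ideal.add_mem _ hfhatI heltI
      exact KEY (degreeOf 0 f) f le_rfl hf
/-! ### delta and the easy colon inclusion -/

def Jid' (R : Set (Fin n → K)) : Ideal (MvPolynomial (Fin n) K) :=
  Ideal.span (iotaL '' R)

def delta (a : Fin n → K) : MvPolynomial (Fin n) K :=
  ∑ i, C (a i) * ∏ j ∈ Finset.univ.erase i, X j

lemma delta_eq_sum_lsupp (a : Fin n → K) :
    delta a = ∑ i ∈ lsupp a, C (a i) * ∏ j ∈ Finset.univ.erase i, X j := by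
  unfold delta
  refine (Finset.sum_subset (Finset.subset_univ _) fun i _ hi => ?_).symm
  rw [show a i = 0 from not_not.mp (fun h => hi (mem_lsupp.mpr h)), map_zero, zero_mul]

lemma iotaL_mul_xAll (a : Fin n → K) :
    iotaL a * (∏ i, (X i : MvPolynomial (Fin n) K)) = (∏ i ∈ lsupp a, X i) * delta a := by
  unfold iotaL
  rw [delta_eq_sum_lsupp, Finset.sum_mul, Finset.mul_sum]
  refine Finset.sum_congr rfl fun i hi => ?_
  rw [← Finset.prod_erase_mul Finset.univ _ (Finset.mem_univ i),
    ← Finset.prod_erase_mul (lsupp a) _ hi]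
  ring

lemma delta_eq_iota_mul (a : Fin n → K) :
    delta a = iotaL a * ∏ j ∈ (lsupp a)ᶜ, X j := by
  classical
  rw [delta_eq_sum_lsupp]
  unfold iotaL
  rw [Finset.sum_mul]
  refine Finset.sum_congr rfl fun i hi => ?_
  rw [mul_assoc]
  congr 1
  rw [← Finset.prod_union (by
    refine Finset.disjoint_left.mpr fun j hj => ?_
    rw [Finset.mem_compl]
    exact fun hc => hc (Finset.mem_of_mem_erase hj))]
  congr 1
  ext j
  rcases eq_or_ne j i with rfl | hji
  · simp [hi]
  · simp only [Finset.mem_union, Finset.mem_erase, Finset.mem_compl, Finset.mem_univ,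
      and_true, hji]
    by_cases hj : j ∈ lsupp a <;> simp [hj, hji]

lemma delta_add (a b : Fin n → K) : delta (a + b) = delta a + delta b := by
  unfold delta
  rw [← Finset.sum_add_distrib]
  refine Finset.sum_congr rfl fun i _ => ?_
  rw [show (a + b) i = a i + b i from rfl, map_add, add_mul]

lemma delta_smul (c : K) (a : Fin n → K) : delta (c • a) = C c * delta a := by
  unfold delta
  rw [Finset.mul_sum]
  refine Finset.sum_congr rfl fun i _ => ?_
  rw [show (c • a) i = c * a i from rfl, map_mul, mul_assoc]

lemma delta_mem_Jid (R : Set (Fin n → K)) (a : Fin n → K)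
    (ha : a ∈ Submodule.span K R) : delta a ∈ Jid' R := by
  refine Submodule.span_induction ?_ ?_ ?_ ?_ ha
  · intro r hr
    rw [delta_eq_iota_mul]
    exact Ideal.mul_mem_right _ _ (Ideal.subset_span ⟨r, hr, rfl⟩)
  · have : delta (0 : Fin n → K) = 0 := by
      unfold delta; simp
    rw [this]; exact Ideal.zero_mem _
  · intro x y hx hy h1 h2
    rw [delta_add]; exact Ideal.add_mem _ h1 h2
  · intro c x hx h1
    rw [delta_smul]; exact Ideal.mul_mem_left _ _ h1

/-! ### outer reduction -/

variable (K) in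
lemma sum_smul_single {m : ℕ} (w : Fin m → K) :
    ∑ j, w j • (Pi.single j (1:K) : Fin m → K) = w := by
  rw [Finset.sum_congr rfl (fun j _ => by
    rw [← Pi.single_smul, smul_eq_mul, mul_one] :
      ∀ j ∈ Finset.univ, w j • (Pi.single j (1:K) : Fin m → K) = Pi.single j (w j))]
  exact Finset.univ_sum_single w

end OT

/-- `a : Fin n → K` (identified with the linear form `∑ᵢ aᵢ xᵢ ∈ S₁`) is a relation of the
central arrangement whose hyperplanes are the kernels of the linear forms `α i`, i.e. it lies
in the kernel of the map `S₁ → V*`, `xᵢ ↦ αᵢ`. -/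
def IsRel {V : Type*} [AddCommGroup V] [Module K V]
    (α : Fin n → Module.Dual K V) (a : Fin n → K) : Prop :=
  ∑ i, a i • α i = 0

/-- `J(ℜ) = (ι(r) : r ∈ ℜ)`. -/
def Jid (R : Set (Fin n → K)) : Ideal (MvPolynomial (Fin n) K) :=
  Ideal.span (iotaL '' R)

/-- `I(ℜ) = (ι(r) : r ∈ K·ℜ)`. -/
def Iid (R : Set (Fin n → K)) : Ideal (MvPolynomial (Fin n) K) :=
  Ideal.span (iotaL '' (Submodule.span K R : Set (Fin n → K)))

/-- The Orlik–Terao ideal `I(𝒜) = (ι(r) : r ∈ F(𝒜))`. -/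
def OTid {V : Type*} [AddCommGroup V] [Module K V]
    (α : Fin n → Module.Dual K V) : Ideal (MvPolynomial (Fin n) K) :=
  Ideal.span (iotaL '' {a | IsRel α a})

/-- The codimension (height) of an ideal `I`: the infimum of the heights, in the prime
spectrum, of the prime ideals containing `I`. -/
def codim {R : Type*} [CommRing R] (I : Ideal R) : ℕ∞ :=
  ⨅ p ∈ {p : PrimeSpectrum R | I ≤ p.asIdeal}, Order.height p

/-- Corollary 3.3, first part: for a central arrangement `𝒜` and `ℜ ⊆ F(𝒜)`,
`I(ℜ) = √(J(ℜ)) : x_[n] = J(ℜ) : x_[n]`. -/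
theorem Iid_eq_radical_colon_eq_colon
    {V : Type*} [AddCommGroup V] [Module K V] [FiniteDimensional K V]
    (α : Fin n → Module.Dual K V) (hne : ∀ i, α i ≠ 0)
    (hdist : ∀ i j, i ≠ j → LinearMap.ker (α i) ≠ LinearMap.ker (α j))
    (R : Set (Fin n → K)) (hR : ∀ r ∈ R, IsRel α r) :
    Iid R = ((Jid R).radical).colon (Ideal.span {xAll n K}) ∧
    Iid R = (Jid R).colon (Ideal.span {xAll n K}) := by
  classical
  set U := Submodule.span K R with hU
  have hUF : ∀ a, a ∈ U → IsRel α a := by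
    have hle : U ≤ LinearMap.ker (∑ i, (LinearMap.proj i : (Fin n → K) →ₗ[K] K).smulRight (α i)) := by
      rw [hU, Submodule.span_le]
      intro r hr
      rw [SetLike.mem_coe, LinearMap.mem_ker]
      have happ : (∑ i, (LinearMap.proj i : (Fin n → K) →ₗ[K] K).smulRight (α i)) r = ∑ i, r i • α i := by
        simp [LinearMap.sum_apply, LinearMap.smulRight_apply]
      rw [happ]
      exact hR r hr
    intro a ha
    have h1 := hle ha
    rw [LinearMap.mem_ker] at h1
    have happ : (∑ i, (LinearMap.proj i : (Fin n → K) →ₗ[K] K).smulRight (α i)) a = ∑ i, a i • α i := by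
      simp [LinearMap.sum_apply, LinearMap.smulRight_apply]
    rw [happ] at h1
    exact h1
  set Mq := (Fin n → K) ⧸ U with hMq
  set d := Module.finrank K Mq with hd
  set e : Mq ≃ₗ[K] (Fin d → K) := (Module.finBasis K Mq).equivFun with he
  set q : (Fin n → K) →ₗ[K] Mq := U.mkQ with hq
  set v : Fin n → (Fin d → K) := fun i => e (q (Pi.single i 1)) with hv
  have hsum : ∀ a : Fin n → K, ∑ i, a i • v i = e (q a) := by
    intro a
    have h1 : ∑ i, a i • e (q (Pi.single i (1:K)))
        = e (q (∑ i, a i • (Pi.single i (1:K) : Fin n → K))) := by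
      rw [map_sum, map_sum]
      exact Finset.sum_congr rfl fun i _ => by rw [map_smul, map_smul]
    rw [hv]
    rw [h1, OT.sum_smul_single K a]
  have hmem : ∀ a : Fin n → K, (∑ i, a i • v i = 0 ↔ a ∈ U) := by
    intro a
    rw [hsum, LinearEquiv.map_eq_zero_iff,
      show q a = Submodule.Quotient.mk a from rfl, Submodule.Quotient.mk_eq_zero]
  have hvne : ∀ i, v i ≠ 0 := by
    intro i h0
    have hsingle : ∑ j, (Pi.single i (1:K) : Fin n → K) j • v j = v i := by
      rw [Finset.sum_eq_single i]
      · simp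
      · intro b _ hb; rw [Pi.single_eq_of_ne hb, zero_smul]
      · simp
    have hiU : (Pi.single i (1:K) : Fin n → K) ∈ U := (hmem _).mp (by rw [hsingle, h0])
    have hrel := hUF _ hiU
    rw [IsRel] at hrel
    have h2 : ∑ j, (Pi.single i (1:K) : Fin n → K) j • α j = α i := by
      rw [Finset.sum_eq_single i]
      · simp
      · intro b _ hb; rw [Pi.single_eq_of_ne hb, zero_smul]
      · simp
    rw [h2] at hrel
    exact hne i hrel
  have hsetq : {a : Fin n → K | ∑ i, a i • v i = 0} = (U : Set (Fin n → K)) := by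
    ext a
    rw [Set.mem_setOf_eq, hmem a]
    rfl
  have hIeq : Iid R = Ideal.span (iotaL '' {a : Fin n → K | ∑ i, a i • v i = 0}) := by
    rw [Iid, hsetq]
  have hker : RingHom.ker (OT.phi v).toRingHom = Iid R := by
    refine le_antisymm ?_ ?_
    · intro f hf
      rw [hIeq]
      exact OT.ker_phi_le n v hvne f hf
    · rw [hIeq]
      exact OT.span_iota_le_ker v hvne
  have hIcolon : Iid R ≤ (Jid R).colon (Ideal.span {xAll n K}) := by
    rw [Iid, Ideal.span_le]
    rintro _ ⟨a, ha, rfl⟩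
    rw [SetLike.mem_coe, Ideal.mem_colon_span_singleton, xAll, OT.iotaL_mul_xAll]
    exact Ideal.mul_mem_left _ _ (OT.delta_mem_Jid R a ha)
  have hJI : Jid R ≤ Iid R :=
    Ideal.span_mono (Set.image_mono Submodule.subset_span)
  have hprime : (RingHom.ker (OT.phi v).toRingHom).IsPrime := RingHom.ker_isPrime _
  have hxker : xAll n K ∉ RingHom.ker (OT.phi v).toRingHom := by
    rw [RingHom.mem_ker]
    intro h0
    rw [show ((OT.phi v).toRingHom) (xAll n K) = ∏ i, (OT.aMap K d (OT.lmap K d (v i)))⁻¹ from by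
      rw [xAll]
      show (OT.phi v) (∏ i, X i) = _
      rw [map_prod]
      exact Finset.prod_congr rfl fun i _ => OT.phi_X v i] at h0
    exact (Finset.prod_ne_zero_iff.mpr fun i _ => inv_ne_zero (OT.aMap_lmap_ne v hvne i)) h0
  have hhard : ((Jid R).radical).colon (Ideal.span {xAll n K}) ≤ Iid R := by
    intro f hf
    rw [Ideal.mem_colon_span_singleton] at hf
    have hradle : (Jid R).radical ≤ RingHom.ker (OT.phi v).toRingHom :=
      (hprime.radical_le_iff).mpr (le_trans hJI (le_of_eq hker.symm))
    have h2 : f * xAll n K ∈ RingHom.ker (OT.phi v).toRingHom := hradle hf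
    rcases hprime.mem_or_mem h2 with h3 | h3
    · rw [← hker]
      exact h3
    · exact absurd h3 hxker
  have hmono : (Jid R).colon (Ideal.span {xAll n K})
      ≤ ((Jid R).radical).colon (Ideal.span {xAll n K}) := by
    intro f hf
    rw [Ideal.mem_colon_span_singleton] at hf ⊢
    exact Ideal.le_radical hf
  constructor
  · exact le_antisymm (le_trans hIcolon hmono) hhard
  · exact le_antisymm hIcolon (le_trans hmono hhard)


end
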